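/- Fix ρ > 0, a tensor X ∈ ℝ^{I₁×I₂×I₃}, and matrices C_n ∈ ℝ^{d_n × ∏_{j≠n} d_j} for n = 1,2,3. For column-orthonormal U, V, W and G ∈ ℝ^{d₁×d₂×d₃}, let f(G,U,V,W) = Σ_{n=1}^{3} (ρ/2)‖G_{(n)} − C_n‖²_F + (1/2)‖X − G ×₁ U ×₂ V ×₃ W‖²_F, and set A = X ×₁ Uᵀ ×₂ Vᵀ ×₃ Wᵀ, B = Σ_{n=1}^{3} refold_n(C_n). Then for every column-orthonormal U, V, W, min_G f(G,U,V,W) = c₁ − (1/(2(1+3ρ))) ‖A + ρ B‖²_F, where c₁ = (1/2)‖X‖²_F + (ρ/2) Σ_{n=1}^{3} ‖C_n‖²_F does not depend on (U,V,W). Consequently, minimizing f over G and column-orthonormal (U,V,W) is equivalent to maximizing g(U,V,W) = ‖A + ρ B‖²_F over column-orthonormal (U,V,W). -/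

import Mathlib

open scoped BigOperators
open Matrix Kronecker Filter Topology

/-- A third-order real tensor of size `I₁ × I₂ × I₃`. -/
abbrev Tensor (I₁ I₂ I₃ : ℕ) : Type := Fin I₁ → Fin I₂ → Fin I₃ → ℝ

namespace Tensor

variable {I₁ I₂ I₃ J d₁ d₂ d₃ : ℕ}

/-- The 1-mode product `X ×₁ U`. -/
noncomputable def mode1 (X : Tensor I₁ I₂ I₃) (U : Matrix (Fin J) (Fin I₁) ℝ) : Tensor J I₂ I₃ :=
  fun j i₂ i₃ => ∑ i₁, X i₁ i₂ i₃ * U j i₁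

/-- The 2-mode product `X ×₂ V`. -/
noncomputable def mode2 (X : Tensor I₁ I₂ I₃) (V : Matrix (Fin J) (Fin I₂) ℝ) : Tensor I₁ J I₃ :=
  fun i₁ j i₃ => ∑ i₂, X i₁ i₂ i₃ * V j i₂

/-- The 3-mode product `X ×₃ W`. -/
noncomputable def mode3 (X : Tensor I₁ I₂ I₃) (W : Matrix (Fin J) (Fin I₃) ℝ) : Tensor I₁ I₂ J :=
  fun i₁ i₂ j => ∑ i₃, X i₁ i₂ i₃ * W j i₃

/-- `G ×₁ U ×₂ V ×₃ W`. -/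
noncomputable def tucker (G : Tensor d₁ d₂ d₃) (U : Matrix (Fin I₁) (Fin d₁) ℝ)
    (V : Matrix (Fin I₂) (Fin d₂) ℝ) (W : Matrix (Fin I₃) (Fin d₃) ℝ) : Tensor I₁ I₂ I₃ :=
  mode3 (mode2 (mode1 G U) V) W

/-- Mode-1 unfolding `X₍₁₎`; columns are indexed by pairs `(i₃, i₂)` (with `i₂` varying fastest,
matching `j = 1 + (i₂ - 1) + (i₃ - 1)·I₂`). -/
def unfold1 (X : Tensor I₁ I₂ I₃) : Matrix (Fin I₁) (Fin I₃ × Fin I₂) ℝ :=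
  fun i₁ p => X i₁ p.2 p.1

/-- Mode-2 unfolding `X₍₂₎`; columns indexed by `(i₃, i₁)` with `i₁` fastest. -/
def unfold2 (X : Tensor I₁ I₂ I₃) : Matrix (Fin I₂) (Fin I₃ × Fin I₁) ℝ :=
  fun i₂ p => X p.2 i₂ p.1

/-- Mode-3 unfolding `X₍₃₎`; columns indexed by `(i₂, i₁)` with `i₁` fastest. -/
def unfold3 (X : Tensor I₁ I₂ I₃) : Matrix (Fin I₃) (Fin I₂ × Fin I₁) ℝ :=
  fun i₃ p => X p.2 p.1 i₃

/-- Refolding of a mode-1 unfolded matrix back into a tensor. -/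
def refold1 (M : Matrix (Fin d₁) (Fin d₃ × Fin d₂) ℝ) : Tensor d₁ d₂ d₃ :=
  fun i₁ i₂ i₃ => M i₁ (i₃, i₂)

/-- Refolding of a mode-2 unfolded matrix back into a tensor. -/
def refold2 (M : Matrix (Fin d₂) (Fin d₃ × Fin d₁) ℝ) : Tensor d₁ d₂ d₃ :=
  fun i₁ i₂ i₃ => M i₂ (i₃, i₁)

/-- Refolding of a mode-3 unfolded matrix back into a tensor. -/
def refold3 (M : Matrix (Fin d₃) (Fin d₂ × Fin d₁) ℝ) : Tensor d₁ d₂ d₃ :=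
  fun i₁ i₂ i₃ => M i₃ (i₂, i₁)

/-- Tensor inner product `⟨A, B⟩`. -/
def tinner (A B : Tensor I₁ I₂ I₃) : ℝ := ∑ i₁, ∑ i₂, ∑ i₃, A i₁ i₂ i₃ * B i₁ i₂ i₃

/-- Squared Frobenius norm `‖X‖²_F`. -/
def frobSq (X : Tensor I₁ I₂ I₃) : ℝ := ∑ i₁, ∑ i₂, ∑ i₃, (X i₁ i₂ i₃) ^ 2

/-- Frobenius norm `‖X‖_F`. -/
noncomputable def frob (X : Tensor I₁ I₂ I₃) : ℝ := Real.sqrt (frobSq X)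

/-- Hadamard (entrywise) product of tensors. -/
def hadamard (A B : Tensor I₁ I₂ I₃) : Tensor I₁ I₂ I₃ := fun i₁ i₂ i₃ => A i₁ i₂ i₃ * B i₁ i₂ i₃

/-- `P_Ω(X)`: agrees with `X` on `Ω` and is zero elsewhere. -/
def proj (Ω : Set (Fin I₁ × Fin I₂ × Fin I₃)) [DecidablePred (· ∈ Ω)] (X : Tensor I₁ I₂ I₃) :
    Tensor I₁ I₂ I₃ := fun i₁ i₂ i₃ => if (i₁, i₂, i₃) ∈ Ω then X i₁ i₂ i₃ else 0

/-- `P_Ω^⊥(X) = X - P_Ω(X)`. -/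
def projc (Ω : Set (Fin I₁ × Fin I₂ × Fin I₃)) [DecidablePred (· ∈ Ω)] (X : Tensor I₁ I₂ I₃) :
    Tensor I₁ I₂ I₃ := X - proj Ω X

/-- The 0/1 indicator tensor of an index set `Ω`. -/
def indic (Ω : Set (Fin I₁ × Fin I₂ × Fin I₃)) [DecidablePred (· ∈ Ω)] : Tensor I₁ I₂ I₃ :=
  fun i₁ i₂ i₃ => if (i₁, i₂, i₃) ∈ Ω then 1 else 0

end Tensor

namespace MatrixAux

/-- The singular values of a real matrix `M`: square roots of the eigenvalues of `MᴴM`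
(for real matrices `Mᴴ = Mᵀ`). -/
noncomputable def singularValues {m n : Type*} [Fintype m] [Fintype n] [DecidableEq n]
    (M : Matrix m n ℝ) : n → ℝ :=
  fun i => Real.sqrt ((show (Mᵀ * M).IsHermitian by
    simpa using Matrix.isHermitian_conjTranspose_mul_self M).eigenvalues i)

/-- The Schatten `p`-norm of a real matrix, `(∑ᵢ σᵢᵖ)^(1/p)`. -/
noncomputable def schattenNorm (p : ℝ) {m n : Type*} [Fintype m] [Fintype n] [DecidableEq n]
    (M : Matrix m n ℝ) : ℝ :=
  (∑ i, singularValues M i ^ p) ^ (1 / p)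

/-- The trace norm (nuclear norm) of a real matrix: the sum of its singular values. -/
noncomputable def traceNorm {m n : Type*} [Fintype m] [Fintype n] [DecidableEq n]
    (M : Matrix m n ℝ) : ℝ :=
  ∑ i, singularValues M i

/-- Squared Frobenius norm of a matrix. -/
def frobSq {m n : Type*} [Fintype m] [Fintype n] (M : Matrix m n ℝ) : ℝ := ∑ i, ∑ j, (M i j) ^ 2

/-- Frobenius norm of a matrix. -/
noncomputable def frob {m n : Type*} [Fintype m] [Fintype n] (M : Matrix m n ℝ) : ℝ :=
  Real.sqrt (frobSq M)

/-- Frobenius (trace) inner product of matrices. -/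
def minner {m n : Type*} [Fintype m] [Fintype n] (A B : Matrix m n ℝ) : ℝ :=
  ∑ i, ∑ j, A i j * B i j

end MatrixAux

/-- The Schatten `p`-norm of a third-order tensor: the average of the Schatten `p`-norms of its
three mode-`n` unfoldings. -/
noncomputable def tensorSchattenNorm (p : ℝ) {I₁ I₂ I₃ : ℕ} (X : Tensor I₁ I₂ I₃) : ℝ :=
  (MatrixAux.schattenNorm p (Tensor.unfold1 X) + MatrixAux.schattenNorm p (Tensor.unfold2 X)
    + MatrixAux.schattenNorm p (Tensor.unfold3 X)) / 3

namespace TuckerAux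

open Tensor

-- sum shuffling helpers
lemma sum3_rot {a b c : ℕ} (f : Fin a → Fin b → Fin c → ℝ) :
    ∑ i, ∑ j, ∑ k, f i j k = ∑ k, ∑ i, ∑ j, f i j k := by
  conv_lhs => enter [2, i]; rw [Finset.sum_comm]
  exact Finset.sum_comm

lemma sum3_rot' {a b c : ℕ} (f : Fin a → Fin b → Fin c → ℝ) :
    ∑ i, ∑ j, ∑ k, f i j k = ∑ j, ∑ k, ∑ i, f i j k := by
  rw [Finset.sum_comm]
  conv_lhs => enter [2, j]; rw [Finset.sum_comm]

lemma sum3_rev {a b c : ℕ} (f : Fin a → Fin b → Fin c → ℝ) :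
    ∑ i, ∑ j, ∑ k, f i j k = ∑ k, ∑ j, ∑ i, f i j k := by
  rw [sum3_rot]
  exact Finset.sum_congr rfl fun k _ => Finset.sum_comm

lemma sum4_swap14 {a b c d : ℕ} (f : Fin a → Fin b → Fin c → Fin d → ℝ) :
    ∑ i, ∑ j, ∑ k, ∑ l, f i j k l = ∑ l, ∑ j, ∑ k, ∑ i, f i j k l := by
  conv_lhs => enter [2, i]; rw [sum3_rot (f i)]
  rw [Finset.sum_comm]
  exact Finset.sum_congr rfl fun l _ => sum3_rot' fun i j k => f i j k l

lemma sum4_swap24 {a b c d : ℕ} (f : Fin a → Fin b → Fin c → Fin d → ℝ) :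
    ∑ i, ∑ j, ∑ k, ∑ l, f i j k l = ∑ i, ∑ l, ∑ k, ∑ j, f i j k l :=
  Finset.sum_congr rfl fun i _ => sum3_rev (f i)

lemma sum4_swap34 {a b c d : ℕ} (f : Fin a → Fin b → Fin c → Fin d → ℝ) :
    ∑ i, ∑ j, ∑ k, ∑ l, f i j k l = ∑ i, ∑ j, ∑ l, ∑ k, f i j k l :=
  Finset.sum_congr rfl fun i _ => Finset.sum_congr rfl fun j _ => Finset.sum_comm

variable {I₁ I₂ I₃ J J' d₁ d₂ d₃ : ℕ}

-- basic tinner / frobSq algebra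
lemma tinner_comm (A B : Tensor I₁ I₂ I₃) : tinner A B = tinner B A := by
  unfold tinner
  exact Finset.sum_congr rfl fun _ _ => Finset.sum_congr rfl fun _ _ =>
    Finset.sum_congr rfl fun _ _ => mul_comm _ _

lemma frobSq_eq_tinner (A : Tensor I₁ I₂ I₃) : frobSq A = tinner A A := by
  unfold frobSq tinner
  exact Finset.sum_congr rfl fun _ _ => Finset.sum_congr rfl fun _ _ =>
    Finset.sum_congr rfl fun _ _ => sq (A _ _ _)

lemma frobSq_nonneg (A : Tensor I₁ I₂ I₃) : 0 ≤ frobSq A := by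
  unfold frobSq
  refine Finset.sum_nonneg fun _ _ => Finset.sum_nonneg fun _ _ => Finset.sum_nonneg fun _ _ => sq_nonneg _

lemma tinner_add_right (A B C : Tensor I₁ I₂ I₃) :
    tinner A (B + C) = tinner A B + tinner A C := by
  unfold tinner
  simp [Finset.sum_add_distrib, mul_add]

lemma tinner_smul_right (c : ℝ) (A B : Tensor I₁ I₂ I₃) :
    tinner A (c • B) = c * tinner A B := by
  unfold tinner
  simp [Finset.mul_sum, Pi.smul_apply, smul_eq_mul]
  exact Finset.sum_congr rfl fun _ _ => Finset.sum_congr rfl fun _ _ =>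
    Finset.sum_congr rfl fun _ _ => by ring

lemma frobSq_sub (A B : Tensor I₁ I₂ I₃) :
    frobSq (A - B) = frobSq A - 2 * tinner A B + frobSq B := by
  unfold frobSq tinner
  simp only [Pi.sub_apply]
  simp [Finset.sum_add_distrib, Finset.sum_sub_distrib, Finset.mul_sum, sub_sq, mul_comm]
  exact Finset.sum_congr rfl fun _ _ => Finset.sum_congr rfl fun _ _ =>
    Finset.sum_congr rfl fun _ _ => by ring

lemma frobSq_smul (c : ℝ) (A : Tensor I₁ I₂ I₃) : frobSq (c • A) = c ^ 2 * frobSq A := by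
  unfold frobSq
  simp [Finset.mul_sum, mul_pow]

lemma frobSq_zero : frobSq (0 : Tensor d₁ d₂ d₃) = 0 := by simp [frobSq]

-- matrix analogs
lemma mfrobSq_sub {m n : Type*} [Fintype m] [Fintype n] (A B : Matrix m n ℝ) :
    MatrixAux.frobSq (A - B) = MatrixAux.frobSq A - 2 * MatrixAux.minner A B + MatrixAux.frobSq B := by
  unfold MatrixAux.frobSq MatrixAux.minner
  simp only [Matrix.sub_apply]
  simp [Finset.sum_add_distrib, Finset.sum_sub_distrib, Finset.mul_sum, sub_sq, mul_comm]
  exact Finset.sum_congr rfl fun _ _ => Finset.sum_congr rfl fun _ _ => by ring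

-- unfold identities
lemma frobSq_unfold1 (G : Tensor d₁ d₂ d₃) : MatrixAux.frobSq (unfold1 G) = frobSq G := by
  unfold MatrixAux.frobSq unfold1 frobSq
  simp only [Fintype.sum_prod_type]
  exact Finset.sum_congr rfl fun _ _ => Finset.sum_comm

lemma frobSq_unfold2 (G : Tensor d₁ d₂ d₃) : MatrixAux.frobSq (unfold2 G) = frobSq G := by
  unfold MatrixAux.frobSq unfold2 frobSq
  simp only [Fintype.sum_prod_type]
  exact (sum3_rot' fun i₁ i₂ i₃ => (G i₁ i₂ i₃) ^ 2).symm

lemma frobSq_unfold3 (G : Tensor d₁ d₂ d₃) : MatrixAux.frobSq (unfold3 G) = frobSq G := by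
  unfold MatrixAux.frobSq unfold3 frobSq
  simp only [Fintype.sum_prod_type]
  exact (sum3_rev fun i₁ i₂ i₃ => (G i₁ i₂ i₃) ^ 2).symm

lemma minner_unfold1 (G : Tensor d₁ d₂ d₃) (C : Matrix (Fin d₁) (Fin d₃ × Fin d₂) ℝ) :
    MatrixAux.minner (unfold1 G) C = tinner G (refold1 C) := by
  unfold MatrixAux.minner unfold1 tinner refold1
  simp only [Fintype.sum_prod_type]
  exact Finset.sum_congr rfl fun _ _ => Finset.sum_comm

lemma minner_unfold2 (G : Tensor d₁ d₂ d₃) (C : Matrix (Fin d₂) (Fin d₃ × Fin d₁) ℝ) :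
    MatrixAux.minner (unfold2 G) C = tinner G (refold2 C) := by
  unfold MatrixAux.minner unfold2 tinner refold2
  simp only [Fintype.sum_prod_type]
  exact (sum3_rot' fun i₁ i₂ i₃ => G i₁ i₂ i₃ * C i₂ (i₃, i₁)).symm

lemma minner_unfold3 (G : Tensor d₁ d₂ d₃) (C : Matrix (Fin d₃) (Fin d₂ × Fin d₁) ℝ) :
    MatrixAux.minner (unfold3 G) C = tinner G (refold3 C) := by
  unfold MatrixAux.minner unfold3 tinner refold3
  simp only [Fintype.sum_prod_type]
  exact (sum3_rev fun i₁ i₂ i₃ => G i₁ i₂ i₃ * C i₃ (i₂, i₁)).symm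

-- mode adjoints
lemma tinner_mode1 (X : Tensor I₁ I₂ I₃) (G : Tensor J I₂ I₃) (U : Matrix (Fin I₁) (Fin J) ℝ) :
    tinner X (mode1 G U) = tinner (mode1 X Uᵀ) G := by
  unfold tinner mode1
  simp only [Finset.mul_sum, Finset.sum_mul, Matrix.transpose_apply]
  rw [sum4_swap14]
  exact Finset.sum_congr rfl fun _ _ => Finset.sum_congr rfl fun _ _ =>
    Finset.sum_congr rfl fun _ _ => Finset.sum_congr rfl fun _ _ => by ring

lemma tinner_mode2 (X : Tensor I₁ I₂ I₃) (G : Tensor I₁ J I₃) (V : Matrix (Fin I₂) (Fin J) ℝ) :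
    tinner X (mode2 G V) = tinner (mode2 X Vᵀ) G := by
  unfold tinner mode2
  simp only [Finset.mul_sum, Finset.sum_mul, Matrix.transpose_apply]
  rw [sum4_swap24]
  exact Finset.sum_congr rfl fun _ _ => Finset.sum_congr rfl fun _ _ =>
    Finset.sum_congr rfl fun _ _ => Finset.sum_congr rfl fun _ _ => by ring

lemma tinner_mode3 (X : Tensor I₁ I₂ I₃) (G : Tensor I₁ I₂ J) (W : Matrix (Fin I₃) (Fin J) ℝ) :
    tinner X (mode3 G W) = tinner (mode3 X Wᵀ) G := by
  unfold tinner mode3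
  simp only [Finset.mul_sum, Finset.sum_mul, Matrix.transpose_apply]
  rw [sum4_swap34]
  exact Finset.sum_congr rfl fun _ _ => Finset.sum_congr rfl fun _ _ =>
    Finset.sum_congr rfl fun _ _ => Finset.sum_congr rfl fun _ _ => by ring

-- mode products commute
lemma mode2_mode1 (G : Tensor d₁ I₂ I₃) (U : Matrix (Fin I₁) (Fin d₁) ℝ)
    (V : Matrix (Fin J) (Fin I₂) ℝ) : mode2 (mode1 G U) V = mode1 (mode2 G V) U := by
  funext a b c
  unfold mode1 mode2
  simp only [Finset.sum_mul]
  rw [Finset.sum_comm]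
  exact Finset.sum_congr rfl fun _ _ => Finset.sum_congr rfl fun _ _ => by ring

lemma mode3_mode1 (G : Tensor d₁ I₂ I₃) (U : Matrix (Fin I₁) (Fin d₁) ℝ)
    (W : Matrix (Fin J) (Fin I₃) ℝ) : mode3 (mode1 G U) W = mode1 (mode3 G W) U := by
  funext a b c
  unfold mode1 mode3
  simp only [Finset.sum_mul]
  rw [Finset.sum_comm]
  exact Finset.sum_congr rfl fun _ _ => Finset.sum_congr rfl fun _ _ => by ring

lemma mode3_mode2 (G : Tensor I₁ d₂ I₃) (V : Matrix (Fin I₂) (Fin d₂) ℝ)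
    (W : Matrix (Fin J) (Fin I₃) ℝ) : mode3 (mode2 G V) W = mode2 (mode3 G W) V := by
  funext a b c
  unfold mode2 mode3
  simp only [Finset.sum_mul]
  rw [Finset.sum_comm]
  exact Finset.sum_congr rfl fun _ _ => Finset.sum_congr rfl fun _ _ => by ring

-- mode compositions
lemma mode1_mode1 (G : Tensor d₁ I₂ I₃) (U : Matrix (Fin I₁) (Fin d₁) ℝ)
    (U' : Matrix (Fin J) (Fin I₁) ℝ) : mode1 (mode1 G U) U' = mode1 G (U' * U) := by
  funext a b c
  unfold mode1
  simp only [Finset.sum_mul, Matrix.mul_apply, Finset.mul_sum]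
  rw [Finset.sum_comm]
  exact Finset.sum_congr rfl fun _ _ => Finset.sum_congr rfl fun _ _ => by ring

lemma mode2_mode2 (G : Tensor I₁ d₂ I₃) (V : Matrix (Fin I₂) (Fin d₂) ℝ)
    (V' : Matrix (Fin J) (Fin I₂) ℝ) : mode2 (mode2 G V) V' = mode2 G (V' * V) := by
  funext a b c
  unfold mode2
  simp only [Finset.sum_mul, Matrix.mul_apply, Finset.mul_sum]
  rw [Finset.sum_comm]
  exact Finset.sum_congr rfl fun _ _ => Finset.sum_congr rfl fun _ _ => by ring

lemma mode3_mode3 (G : Tensor I₁ I₂ d₃) (W : Matrix (Fin I₃) (Fin d₃) ℝ)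
    (W' : Matrix (Fin J) (Fin I₃) ℝ) : mode3 (mode3 G W) W' = mode3 G (W' * W) := by
  funext a b c
  unfold mode3
  simp only [Finset.sum_mul, Matrix.mul_apply, Finset.mul_sum]
  rw [Finset.sum_comm]
  exact Finset.sum_congr rfl fun _ _ => Finset.sum_congr rfl fun _ _ => by ring

lemma mode1_one (G : Tensor d₁ d₂ d₃) : mode1 G (1 : Matrix (Fin d₁) (Fin d₁) ℝ) = G := by
  funext a b c
  unfold mode1
  simp [Matrix.one_apply, mul_comm]

lemma mode2_one (G : Tensor d₁ d₂ d₃) : mode2 G (1 : Matrix (Fin d₂) (Fin d₂) ℝ) = G := by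
  funext a b c
  unfold mode2
  simp [Matrix.one_apply, mul_comm]

lemma mode3_one (G : Tensor d₁ d₂ d₃) : mode3 G (1 : Matrix (Fin d₃) (Fin d₃) ℝ) = G := by
  funext a b c
  unfold mode3
  simp [Matrix.one_apply, mul_comm]

-- tucker adjoint
lemma tinner_tucker (X : Tensor I₁ I₂ I₃) (G : Tensor d₁ d₂ d₃)
    (U : Matrix (Fin I₁) (Fin d₁) ℝ) (V : Matrix (Fin I₂) (Fin d₂) ℝ)
    (W : Matrix (Fin I₃) (Fin d₃) ℝ) :
    tinner X (tucker G U V W) = tinner (tucker X Uᵀ Vᵀ Wᵀ) G := by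
  unfold tucker
  rw [tinner_mode3, tinner_mode2, tinner_mode1, mode2_mode1, mode3_mode1, mode3_mode2]

-- tucker inverse under orthonormality
lemma tucker_left_inverse (G : Tensor d₁ d₂ d₃)
    (U : Matrix (Fin I₁) (Fin d₁) ℝ) (V : Matrix (Fin I₂) (Fin d₂) ℝ)
    (W : Matrix (Fin I₃) (Fin d₃) ℝ) (hU : Uᵀ * U = 1) (hV : Vᵀ * V = 1) (hW : Wᵀ * W = 1) :
    tucker (tucker G U V W) Uᵀ Vᵀ Wᵀ = G := by
  unfold tucker
  rw [show mode1 (mode3 (mode2 (mode1 G U) V) W) Uᵀ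
      = mode3 (mode2 (mode1 (mode1 G U) Uᵀ) V) W by
    rw [← mode3_mode1, ← mode2_mode1]]
  rw [mode1_mode1, hU, mode1_one]
  rw [show mode2 (mode3 (mode2 G V) W) Vᵀ = mode3 (mode2 (mode2 G V) Vᵀ) W by
    rw [← mode3_mode2]]
  rw [mode2_mode2, hV, mode2_one, mode3_mode3, hW, mode3_one]

lemma frobSq_tucker (G : Tensor d₁ d₂ d₃)
    (U : Matrix (Fin I₁) (Fin d₁) ℝ) (V : Matrix (Fin I₂) (Fin d₂) ℝ)
    (W : Matrix (Fin I₃) (Fin d₃) ℝ) (hU : Uᵀ * U = 1) (hV : Vᵀ * V = 1) (hW : Wᵀ * W = 1) :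
    frobSq (tucker G U V W : Tensor I₁ I₂ I₃) = frobSq G := by
  rw [frobSq_eq_tinner, tinner_tucker, tucker_left_inverse G U V W hU hV hW,
    ← frobSq_eq_tinner]

end TuckerAux

namespace TuckerAux
variable {I₁ I₂ I₃ d₁ d₂ d₃ : ℕ}
open Tensor Matrix

lemma f_expand (ρ : ℝ) (X : Tensor I₁ I₂ I₃)
    (C₁ : Matrix (Fin d₁) (Fin d₃ × Fin d₂) ℝ)
    (C₂ : Matrix (Fin d₂) (Fin d₃ × Fin d₁) ℝ)
    (C₃ : Matrix (Fin d₃) (Fin d₂ × Fin d₁) ℝ)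
    (U : Matrix (Fin I₁) (Fin d₁) ℝ) (V : Matrix (Fin I₂) (Fin d₂) ℝ)
    (W : Matrix (Fin I₃) (Fin d₃) ℝ) (hU : Uᵀ * U = 1) (hV : Vᵀ * V = 1) (hW : Wᵀ * W = 1)
    (G : Tensor d₁ d₂ d₃) :
    ρ / 2 * (MatrixAux.frobSq (unfold1 G - C₁) + MatrixAux.frobSq (unfold2 G - C₂)
        + MatrixAux.frobSq (unfold3 G - C₃)) + 1 / 2 * frobSq (X - tucker G U V W)
    = (1 + 3 * ρ) / 2 * frobSq G
      - tinner G (tucker X Uᵀ Vᵀ Wᵀ + ρ • (refold1 C₁ + refold2 C₂ + refold3 C₃))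
      + (1 / 2 * frobSq X
        + ρ / 2 * (MatrixAux.frobSq C₁ + MatrixAux.frobSq C₂ + MatrixAux.frobSq C₃)) := by
  rw [mfrobSq_sub, mfrobSq_sub, mfrobSq_sub, frobSq_sub, frobSq_unfold1, frobSq_unfold2,
    frobSq_unfold3, minner_unfold1, minner_unfold2, minner_unfold3,
    frobSq_tucker G U V W hU hV hW, tinner_tucker,
    tinner_add_right, tinner_smul_right, tinner_add_right, tinner_add_right,
    tinner_comm (tucker X Uᵀ Vᵀ Wᵀ) G]
  ring
end TuckerAux

/-- For every column-orthonormal `U, V, W`,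
`min_G f(G,U,V,W) = c₁ − (1/(2(1+3ρ)))‖A + ρB‖²_F` with the constant
`c₁ = (1/2)‖X‖²_F + (ρ/2)∑ₙ‖Cₙ‖²_F` independent of `(U,V,W)`; consequently minimizing `f` is
equivalent to maximizing `g(U,V,W) = ‖A + ρB‖²_F` over column-orthonormal `(U,V,W)`. -/
theorem min_core_value_eq {I₁ I₂ I₃ d₁ d₂ d₃ : ℕ} (ρ : ℝ) (hρ : 0 < ρ)
    (X : Tensor I₁ I₂ I₃)
    (C₁ : Matrix (Fin d₁) (Fin d₃ × Fin d₂) ℝ)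
    (C₂ : Matrix (Fin d₂) (Fin d₃ × Fin d₁) ℝ)
    (C₃ : Matrix (Fin d₃) (Fin d₂ × Fin d₁) ℝ) :
    let f : Tensor d₁ d₂ d₃ → Matrix (Fin I₁) (Fin d₁) ℝ → Matrix (Fin I₂) (Fin d₂) ℝ →
        Matrix (Fin I₃) (Fin d₃) ℝ → ℝ := fun G U V W =>
      ρ / 2 * (MatrixAux.frobSq (Tensor.unfold1 G - C₁)
          + MatrixAux.frobSq (Tensor.unfold2 G - C₂)
          + MatrixAux.frobSq (Tensor.unfold3 G - C₃))
        + 1 / 2 * Tensor.frobSq (X - Tensor.tucker G U V W)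
    let B : Tensor d₁ d₂ d₃ := Tensor.refold1 C₁ + Tensor.refold2 C₂ + Tensor.refold3 C₃
    let A : Matrix (Fin I₁) (Fin d₁) ℝ → Matrix (Fin I₂) (Fin d₂) ℝ →
        Matrix (Fin I₃) (Fin d₃) ℝ → Tensor d₁ d₂ d₃ := fun U V W => Tensor.tucker X Uᵀ Vᵀ Wᵀ
    let Gstar : Matrix (Fin I₁) (Fin d₁) ℝ → Matrix (Fin I₂) (Fin d₂) ℝ →
        Matrix (Fin I₃) (Fin d₃) ℝ → Tensor d₁ d₂ d₃ := fun U V W =>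
      (1 / (1 + 3 * ρ)) • (A U V W + ρ • B)
    let g : Matrix (Fin I₁) (Fin d₁) ℝ → Matrix (Fin I₂) (Fin d₂) ℝ →
        Matrix (Fin I₃) (Fin d₃) ℝ → ℝ := fun U V W => Tensor.frobSq (A U V W + ρ • B)
    let c₁ : ℝ := 1 / 2 * Tensor.frobSq X
      + ρ / 2 * (MatrixAux.frobSq C₁ + MatrixAux.frobSq C₂ + MatrixAux.frobSq C₃)
    ∀ (U : Matrix (Fin I₁) (Fin d₁) ℝ) (V : Matrix (Fin I₂) (Fin d₂) ℝ)
      (W : Matrix (Fin I₃) (Fin d₃) ℝ), Uᵀ * U = 1 → Vᵀ * V = 1 → Wᵀ * W = 1 →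
      (∀ G, f (Gstar U V W) U V W ≤ f G U V W) ∧
      f (Gstar U V W) U V W = c₁ - 1 / (2 * (1 + 3 * ρ)) * g U V W ∧
      ∀ (U' : Matrix (Fin I₁) (Fin d₁) ℝ) (V' : Matrix (Fin I₂) (Fin d₂) ℝ)
        (W' : Matrix (Fin I₃) (Fin d₃) ℝ), U'ᵀ * U' = 1 → V'ᵀ * V' = 1 → W'ᵀ * W' = 1 →
        (f (Gstar U V W) U V W ≤ f (Gstar U' V' W') U' V' W' ↔ g U' V' W' ≤ g U V W) := by
  
  intro f B A Gstar g c₁ U V W hU hV hW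
  have hα : (0:ℝ) < 1 + 3 * ρ := by linarith
  have hαne : (1 + 3 * ρ : ℝ) ≠ 0 := ne_of_gt hα
  have hexp : ∀ (U : Matrix (Fin I₁) (Fin d₁) ℝ) (V : Matrix (Fin I₂) (Fin d₂) ℝ)
      (W : Matrix (Fin I₃) (Fin d₃) ℝ), Uᵀ * U = 1 → Vᵀ * V = 1 → Wᵀ * W = 1 →
      ∀ G, f G U V W = (1 + 3 * ρ) / 2 * Tensor.frobSq G
        - Tensor.tinner G (A U V W + ρ • B) + c₁ := by
    intro U V W hU hV hW G
    exact TuckerAux.f_expand ρ X C₁ C₂ C₃ U V W hU hV hW G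
  have key : ∀ (U : Matrix (Fin I₁) (Fin d₁) ℝ) (V : Matrix (Fin I₂) (Fin d₂) ℝ)
      (W : Matrix (Fin I₃) (Fin d₃) ℝ) (G : Tensor d₁ d₂ d₃),
      (1 + 3 * ρ) / 2 * Tensor.frobSq G - Tensor.tinner G (A U V W + ρ • B) + c₁
      = (1 + 3 * ρ) / 2 * Tensor.frobSq (G - Gstar U V W)
        + (c₁ - 1 / (2 * (1 + 3 * ρ)) * g U V W) := by
    intro U V W G
    show _ = (1 + 3 * ρ) / 2
        * Tensor.frobSq (G - (1 / (1 + 3 * ρ)) • (A U V W + ρ • B)) + _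
    rw [TuckerAux.frobSq_sub, TuckerAux.tinner_smul_right, TuckerAux.frobSq_smul]
    show _ = _ + (c₁ - 1 / (2 * (1 + 3 * ρ)) * Tensor.frobSq (A U V W + ρ • B))
    field_simp
    ring
  have hval : ∀ (U : Matrix (Fin I₁) (Fin d₁) ℝ) (V : Matrix (Fin I₂) (Fin d₂) ℝ)
      (W : Matrix (Fin I₃) (Fin d₃) ℝ), Uᵀ * U = 1 → Vᵀ * V = 1 → Wᵀ * W = 1 →
      f (Gstar U V W) U V W = c₁ - 1 / (2 * (1 + 3 * ρ)) * g U V W := by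
    intro U V W hU hV hW
    rw [hexp U V W hU hV hW, key U V W, sub_self, TuckerAux.frobSq_zero, mul_zero, zero_add]
  refine ⟨?_, hval U V W hU hV hW, ?_⟩
  · intro G
    rw [hexp U V W hU hV hW, hexp U V W hU hV hW, key U V W, key U V W, sub_self,
      TuckerAux.frobSq_zero, mul_zero, zero_add]
    have := TuckerAux.frobSq_nonneg (G - Gstar U V W)
    nlinarith
  · intro U' V' W' hU' hV' hW'
    rw [hval U V W hU hV hW, hval U' V' W' hU' hV' hW']
    have hk : (0:ℝ) < 1 / (2 * (1 + 3 * ρ)) := by positivity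
    rw [sub_le_sub_iff_left, mul_le_mul_iff_right₀ hk]
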